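/- The subgroup H of the Grigorchuk group G consisting of elements that preserve the first letter of every binary sequence equals the normal closure of {b, c, d} in G, has index 2 in G, and is generated by {b, c, d, aba, aca, ada}. -/

import Mathlib

/-- The generator `a` of the Grigorchuk group, acting on finite binary sequences. -/
def grigA : List Bool → List Bool
  | [] => []
  | x :: σ => (!x) :: σ

mutual
  /-- The generator `b` of the Grigorchuk group. -/
  def grigB : List Bool → List Bool
    | [] => []
    | false :: σ => false :: grigA σ
    | true :: σ => true :: grigC σ
  /-- The generator `c` of the Grigorchuk group. -/
  def grigC : List Bool → List Bool
    | [] => []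
    | false :: σ => false :: grigA σ
    | true :: σ => true :: grigD σ
  /-- The generator `d` of the Grigorchuk group. -/
  def grigD : List Bool → List Bool
    | [] => []
    | false :: σ => false :: σ
    | true :: σ => true :: grigB σ
end

theorem grigA_involutive : Function.Involutive grigA := by
  intro l
  rcases l with _ | ⟨x, σ⟩
  · rfl
  · cases x <;> rfl

theorem grigBCD_involutive :
    ∀ l : List Bool, grigB (grigB l) = l ∧ grigC (grigC l) = l ∧ grigD (grigD l) = l := by
  intro l
  induction l with
  | nil => exact ⟨rfl, rfl, rfl⟩
  | cons x σ ih =>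
      cases x <;>
        simp [grigB, grigC, grigD, grigA_involutive σ, ih.1, ih.2.1, ih.2.2]

theorem grigB_involutive : Function.Involutive grigB := fun l => (grigBCD_involutive l).1
theorem grigC_involutive : Function.Involutive grigC := fun l => (grigBCD_involutive l).2.1
theorem grigD_involutive : Function.Involutive grigD := fun l => (grigBCD_involutive l).2.2

/-- The generator `a` as a permutation of binary sequences. -/
def aP : Equiv.Perm (List Bool) := grigA_involutive.toPerm
/-- The generator `b` as a permutation of binary sequences. -/
def bP : Equiv.Perm (List Bool) := grigB_involutive.toPerm
/-- The generator `c` as a permutation of binary sequences. -/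
def cP : Equiv.Perm (List Bool) := grigC_involutive.toPerm
/-- The generator `d` as a permutation of binary sequences. -/
def dP : Equiv.Perm (List Bool) := grigD_involutive.toPerm

/-- The Grigorchuk group, as the group of permutations of finite binary sequences
generated by `a`, `b`, `c`, `d`. -/
def Grig : Subgroup (Equiv.Perm (List Bool)) := Subgroup.closure {aP, bP, cP, dP}

/-- `a` as an element of the Grigorchuk group. -/
def ga : Grig := ⟨aP, Subgroup.subset_closure (by simp)⟩
/-- `b` as an element of the Grigorchuk group. -/
def gb : Grig := ⟨bP, Subgroup.subset_closure (by simp)⟩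
/-- `c` as an element of the Grigorchuk group. -/
def gc : Grig := ⟨cP, Subgroup.subset_closure (by simp)⟩
/-- `d` as an element of the Grigorchuk group. -/
def gd : Grig := ⟨dP, Subgroup.subset_closure (by simp)⟩

/-- A permutation of binary sequences preserves the first letter. -/
def FixesFirst (g : Equiv.Perm (List Bool)) : Prop :=
  ∀ (x : Bool) (σ : List Bool), ∃ σ' : List Bool, g (x :: σ) = x :: σ'


section GrigAux

open Subgroup

/-- Compatibility of a permutation of lists with a permutation of optional first letters. -/
def HeadCompat (g : Equiv.Perm (List Bool)) (e : Equiv.Perm (Option Bool)) : Prop :=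
  ∀ l : List Bool, (g l).head? = e l.head?

theorem headCompat_unique {g : Equiv.Perm (List Bool)} {e e' : Equiv.Perm (Option Bool)}
    (h : HeadCompat g e) (h' : HeadCompat g e') : e = e' := by
  apply Equiv.ext
  intro o
  obtain ⟨l, rfl⟩ : ∃ l : List Bool, l.head? = o := by
    cases o with
    | none => exact ⟨[], rfl⟩
    | some x => exact ⟨[x], rfl⟩
  rw [← h l]
  exact h' l

/-- The subgroup of permutations compatible with a permutation of first letters. -/
def Kgrp : Subgroup (Equiv.Perm (List Bool)) where
  carrier := {g | ∃ e, HeadCompat g e}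
  one_mem' := ⟨1, fun _ => rfl⟩
  mul_mem' := by
    rintro g h ⟨e, he⟩ ⟨e', he'⟩
    refine ⟨e * e', fun l => ?_⟩
    have : (g * h) l = g (h l) := rfl
    rw [this, he, he']
    rfl
  inv_mem' := by
    rintro g ⟨e, he⟩
    refine ⟨e⁻¹, fun l => ?_⟩
    have h1 := he (g⁻¹ l)
    rw [show g (g⁻¹ l) = l from Equiv.apply_symm_apply g l] at h1
    rw [h1]; exact (Equiv.symm_apply_apply e _).symm

/-- The induced permutation of optional first letters. -/
noncomputable def headHom : Kgrp →* Equiv.Perm (Option Bool) where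
  toFun g := Classical.choose g.2
  map_one' := headCompat_unique (Classical.choose_spec (1 : Kgrp).2) (fun _ => rfl)
  map_mul' g h := by
    refine headCompat_unique (Classical.choose_spec (g * h).2) (fun l => ?_)
    have hg := Classical.choose_spec g.2
    have hh := Classical.choose_spec h.2
    have : ((g * h : Kgrp) : Equiv.Perm (List Bool)) l
        = (g : Equiv.Perm (List Bool)) ((h : Equiv.Perm (List Bool)) l) := rfl
    rw [this, hg, hh]
    rfl

theorem headHom_compat (g : Kgrp) : HeadCompat ↑g (headHom g) := Classical.choose_spec g.2

theorem headHom_eq {g : Kgrp} {e : Equiv.Perm (Option Bool)} (h : HeadCompat ↑g e) :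
    headHom g = e :=
  headCompat_unique (headHom_compat g) h

/-- `not` is involutive. -/
def notInv : Function.Involutive Bool.not := fun b => Bool.not_not b

/-- The permutation of optional first letters induced by `a`. -/
def eA : Equiv.Perm (Option Bool) := Equiv.optionCongr (Function.Involutive.toPerm Bool.not notInv)

theorem headCompat_a : HeadCompat aP eA := by
  intro l
  rcases l with _ | ⟨x, σ⟩
  · rfl
  · cases x <;> rfl

theorem headCompat_b : HeadCompat bP 1 := by
  intro l
  rcases l with _ | ⟨x, σ⟩
  · rfl
  · cases x <;> simp [bP, grigB]

theorem headCompat_c : HeadCompat cP 1 := by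
  intro l
  rcases l with _ | ⟨x, σ⟩
  · rfl
  · cases x <;> simp [cP, grigC]

theorem headCompat_d : HeadCompat dP 1 := by
  intro l
  rcases l with _ | ⟨x, σ⟩
  · rfl
  · cases x <;> simp [dP, grigD]

theorem grig_le_K : Grig ≤ Kgrp := by
  rw [Grig, Subgroup.closure_le]
  rintro x (rfl | rfl | rfl | rfl)
  · exact ⟨eA, headCompat_a⟩
  · exact ⟨1, headCompat_b⟩
  · exact ⟨1, headCompat_c⟩
  · exact ⟨1, headCompat_d⟩

/-- The homomorphism from the Grigorchuk group recording the action on first letters. -/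
noncomputable def fHom : Grig →* Equiv.Perm (Option Bool) :=
  headHom.comp (Subgroup.inclusion grig_le_K)

theorem fHom_ga : fHom ga = eA := headHom_eq headCompat_a
theorem fHom_gb : fHom gb = 1 := headHom_eq headCompat_b
theorem fHom_gc : fHom gc = 1 := headHom_eq headCompat_c
theorem fHom_gd : fHom gd = 1 := headHom_eq headCompat_d

theorem eA_ne_one : eA ≠ 1 := by
  intro h
  have h1 := DFunLike.congr_fun h (some false)
  simp [eA, notInv, Function.Involutive.toPerm] at h1

theorem fHom_eq_one_iff (g : Grig) : fHom g = 1 ↔ FixesFirst ↑g := by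
  constructor
  · intro h x σ
    have hc : HeadCompat (↑g) (1 : Equiv.Perm (Option Bool)) := by
      have h1 : HeadCompat (↑g) (fHom g) := headHom_compat (Subgroup.inclusion grig_le_K g)
      rwa [h] at h1
    have h2 := hc (x :: σ)
    rcases hg : (↑g : Equiv.Perm (List Bool)) (x :: σ) with _ | ⟨y, τ⟩
    · rw [hg] at h2; simp at h2
    · rw [hg] at h2
      simp at h2
      exact ⟨τ, by rw [h2]⟩
  · intro hf
    have hc : HeadCompat (↑g) (fHom g) := headHom_compat (Subgroup.inclusion grig_le_K g)
    have hs : ∀ x : Bool, fHom g (some x) = some x := by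
      intro x
      obtain ⟨σ', hσ'⟩ := hf x []
      have h1 := hc [x]
      rw [hσ'] at h1
      exact h1.symm
    have hn : fHom g none = none := by
      rcases h0 : fHom g none with _ | b
      · rfl
      · exact absurd ((fHom g).injective (h0.trans (hs b).symm)) (by simp)
    show headHom _ = 1
    apply headCompat_unique (headHom_compat _)
    intro l
    rcases l with _ | ⟨x, σ⟩
    · exact (hc []).trans hn
    · exact (hc (x :: σ)).trans (hs x)

theorem ga_mul_ga : ga * ga = 1 := by
  apply Subtype.ext
  show aP * aP = 1
  apply Equiv.ext
  intro l
  exact grigA_involutive l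

theorem ga_inv : ga⁻¹ = ga := inv_eq_of_mul_eq_one_right ga_mul_ga

theorem grig_top : Subgroup.closure ({ga, gb, gc, gd} : Set Grig) = ⊤ := by
  have h : ({ga, gb, gc, gd} : Set Grig)
      = ((↑) : Grig → Equiv.Perm (List Bool)) ⁻¹' {aP, bP, cP, dP} := by
    ext x
    simp [ga, gb, gc, gd, Subtype.ext_iff]
  rw [h]
  exact Subgroup.closure_closure_coe_preimage

theorem mem_normalizer_closure {G : Type*} [Group G] {S : Set G} {g : G}
    (h1 : ∀ s ∈ S, g * s * g⁻¹ ∈ Subgroup.closure S)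
    (h2 : ∀ s ∈ S, g⁻¹ * s * g ∈ Subgroup.closure S) :
    g ∈ Subgroup.normalizer (Subgroup.closure S : Set G) := by
  rw [Subgroup.mem_normalizer_iff]
  intro h
  constructor
  · intro hh
    refine Subgroup.closure_induction (p := fun x _ => g * x * g⁻¹ ∈ Subgroup.closure S)
      h1 (by simpa using Subgroup.one_mem _) ?_ ?_ hh
    · intro x y hx hy px py
      have e : g * (x * y) * g⁻¹ = (g * x * g⁻¹) * (g * y * g⁻¹) := by group
      rw [e]; exact mul_mem px py
    · intro x hx px
      have e : g * x⁻¹ * g⁻¹ = (g * x * g⁻¹)⁻¹ := by group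
      rw [e]; exact inv_mem px
  · intro hh
    have key : g⁻¹ * (g * h * g⁻¹) * g ∈ Subgroup.closure S := by
      refine Subgroup.closure_induction (p := fun x _ => g⁻¹ * x * g ∈ Subgroup.closure S)
        h2 (by simpa using Subgroup.one_mem _) ?_ ?_ hh
      · intro x y hx hy px py
        have e : g⁻¹ * (x * y) * g = (g⁻¹ * x * g) * (g⁻¹ * y * g) := by group
        rw [e]; exact mul_mem px py
      · intro x hx px
        have e : g⁻¹ * x⁻¹ * g = (g⁻¹ * x * g)⁻¹ := by group
        rw [e]; exact inv_mem px
    rwa [show g⁻¹ * (g * h * g⁻¹) * g = h from by group] at key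

theorem conj6 : ∀ s ∈ ({gb, gc, gd, ga * gb * ga, ga * gc * ga, ga * gd * ga} : Set Grig),
    ga * s * ga ∈
      Subgroup.closure ({gb, gc, gd, ga * gb * ga, ga * gc * ga, ga * gd * ga} : Set Grig) := by
  rintro s (rfl | rfl | rfl | rfl | rfl | rfl)
  · exact Subgroup.subset_closure (by simp)
  · exact Subgroup.subset_closure (by simp)
  · exact Subgroup.subset_closure (by simp)
  · have e : ga * (ga * gb * ga) * ga = (ga * ga) * gb * (ga * ga) := by group
    rw [e, ga_mul_ga, one_mul, mul_one]
    exact Subgroup.subset_closure (by simp)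
  · have e : ga * (ga * gc * ga) * ga = (ga * ga) * gc * (ga * ga) := by group
    rw [e, ga_mul_ga, one_mul, mul_one]
    exact Subgroup.subset_closure (by simp)
  · have e : ga * (ga * gd * ga) * ga = (ga * ga) * gd * (ga * ga) := by group
    rw [e, ga_mul_ga, one_mul, mul_one]
    exact Subgroup.subset_closure (by simp)

end GrigAux

/-- The subgroup of the Grigorchuk group consisting of the elements preserving the first
letter of every binary sequence equals the normal closure of `{b, c, d}`, has index 2,
and is generated by `{b, c, d, aba, aca, ada}`. -/
theorem grigorchuk_first_level_stabilizer :
    (∀ g : Grig, g ∈ Subgroup.normalClosure ({gb, gc, gd} : Set Grig) ↔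
      FixesFirst (g : Equiv.Perm (List Bool))) ∧
    (Subgroup.normalClosure ({gb, gc, gd} : Set Grig)).index = 2 ∧
    Subgroup.normalClosure ({gb, gc, gd} : Set Grig) =
      Subgroup.closure ({gb, gc, gd, ga * gb * ga, ga * gc * ga, ga * gd * ga} : Set Grig) := by
  have hNker : Subgroup.normalClosure ({gb, gc, gd} : Set Grig) ≤ fHom.ker := by
    apply Subgroup.normalClosure_le_normal
    rintro x (rfl | rfl | rfl)
    · exact MonoidHom.mem_ker.mpr fHom_gb
    · exact MonoidHom.mem_ker.mpr fHom_gc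
    · exact MonoidHom.mem_ker.mpr fHom_gd
  have ga_not_mem : ga ∉ Subgroup.normalClosure ({gb, gc, gd} : Set Grig) := by
    intro h
    exact eA_ne_one (by rw [← fHom_ga]; exact MonoidHom.mem_ker.mp (hNker h))
  have hor : ∀ g : Grig, g ∈ Subgroup.normalClosure ({gb, gc, gd} : Set Grig) ∨
      ga * g ∈ Subgroup.normalClosure ({gb, gc, gd} : Set Grig) := by
    intro g
    have hg : g ∈ Subgroup.closure ({ga, gb, gc, gd} : Set Grig) := by
      rw [grig_top]; exact Subgroup.mem_top g
    refine Subgroup.closure_induction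
      (p := fun x _ => x ∈ Subgroup.normalClosure ({gb, gc, gd} : Set Grig) ∨
        ga * x ∈ Subgroup.normalClosure ({gb, gc, gd} : Set Grig)) ?_ ?_ ?_ ?_ hg
    · rintro x (rfl | rfl | rfl | rfl)
      · exact Or.inr (by rw [ga_mul_ga]; exact Subgroup.one_mem _)
      · exact Or.inl (Subgroup.subset_normalClosure (by simp))
      · exact Or.inl (Subgroup.subset_normalClosure (by simp))
      · exact Or.inl (Subgroup.subset_normalClosure (by simp))
    · exact Or.inl (Subgroup.one_mem _)
    · intro x y hx hy px py
      rcases px with px | px <;> rcases py with py | py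
      · exact Or.inl (mul_mem px py)
      · right
        have h1 := Subgroup.normalClosure_normal.conj_mem _ px ga
        have e : ga * (x * y) = (ga * x * ga⁻¹) * (ga * y) := by group
        rw [e]; exact mul_mem h1 py
      · exact Or.inr (by rw [← mul_assoc]; exact mul_mem px py)
      · left
        have h1 := Subgroup.normalClosure_normal.conj_mem _ px ga⁻¹
        have e : (ga⁻¹ * (ga * x) * ga⁻¹⁻¹) * (ga * y) = x * (ga * ga) * y := by group
        rw [ga_mul_ga, mul_one] at e
        exact e ▸ mul_mem h1 py
    · intro x hx px
      rcases px with px | px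
      · exact Or.inl (inv_mem px)
      · right
        have h1 := Subgroup.normalClosure_normal.conj_mem _ (inv_mem px) ga
        have e : ga * (ga * x)⁻¹ * ga⁻¹ = ga * x⁻¹ * (ga * ga)⁻¹ := by group
        rw [ga_mul_ga, inv_one, mul_one] at e
        exact e ▸ h1
  have hkerN : fHom.ker ≤ Subgroup.normalClosure ({gb, gc, gd} : Set Grig) := by
    intro g hg
    rcases hor g with h | h
    · exact h
    · exfalso
      apply eA_ne_one
      have h1 := MonoidHom.mem_ker.mp (hNker h)
      rwa [map_mul, fHom_ga, MonoidHom.mem_ker.mp hg, mul_one] at h1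
  refine ⟨?_, ?_, ?_⟩
  · intro g
    constructor
    · intro h
      exact (fHom_eq_one_iff g).mp (MonoidHom.mem_ker.mp (hNker h))
    · intro h
      exact hkerN (MonoidHom.mem_ker.mpr ((fHom_eq_one_iff g).mpr h))
  · rw [Subgroup.index_eq_two_iff]
    refine ⟨ga, fun b => ?_⟩
    rcases hor b with h | h
    · refine Or.inr ⟨h, fun hba => ga_not_mem ?_⟩
      have e : ga = b⁻¹ * (b * ga) := by group
      rw [e]; exact mul_mem (inv_mem h) hba
    · refine Or.inl ⟨?_, fun hb => ga_not_mem ?_⟩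
      · have h1 := Subgroup.normalClosure_normal.conj_mem _ h ga⁻¹
        have e : ga⁻¹ * (ga * b) * ga⁻¹⁻¹ = b * ga := by group
        exact e ▸ h1
      · have e : ga = (ga * b) * b⁻¹ := by group
        rw [e]; exact mul_mem h (inv_mem hb)
  · have hCN : Subgroup.closure ({gb, gc, gd, ga * gb * ga, ga * gc * ga, ga * gd * ga} : Set Grig)
        ≤ Subgroup.normalClosure ({gb, gc, gd} : Set Grig) := by
      rw [Subgroup.closure_le]
      rintro x (rfl | rfl | rfl | rfl | rfl | rfl)
      · exact Subgroup.subset_normalClosure (by simp)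
      · exact Subgroup.subset_normalClosure (by simp)
      · exact Subgroup.subset_normalClosure (by simp)
      · have h1 := Subgroup.normalClosure_normal.conj_mem _
          (Subgroup.subset_normalClosure (show gb ∈ ({gb, gc, gd} : Set Grig) by simp)) ga
        rwa [ga_inv] at h1
      · have h1 := Subgroup.normalClosure_normal.conj_mem _
          (Subgroup.subset_normalClosure (show gc ∈ ({gb, gc, gd} : Set Grig) by simp)) ga
        rwa [ga_inv] at h1
      · have h1 := Subgroup.normalClosure_normal.conj_mem _
          (Subgroup.subset_normalClosure (show gd ∈ ({gb, gc, gd} : Set Grig) by simp)) ga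
        rwa [ga_inv] at h1
    have hCnormal : (Subgroup.closure
        ({gb, gc, gd, ga * gb * ga, ga * gc * ga, ga * gd * ga} : Set Grig)).Normal := by
      rw [← Subgroup.normalizer_eq_top_iff, eq_top_iff, ← grig_top, Subgroup.closure_le]
      rintro x (rfl | rfl | rfl | rfl)
      · exact mem_normalizer_closure (fun s hs => by rw [ga_inv]; exact conj6 s hs)
          (fun s hs => by rw [ga_inv]; exact conj6 s hs)
      · exact Subgroup.le_normalizer (Subgroup.subset_closure (by simp))
      · exact Subgroup.le_normalizer (Subgroup.subset_closure (by simp))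
      · exact Subgroup.le_normalizer (Subgroup.subset_closure (by simp))
    have hNC : Subgroup.normalClosure ({gb, gc, gd} : Set Grig) ≤ Subgroup.closure
        ({gb, gc, gd, ga * gb * ga, ga * gc * ga, ga * gd * ga} : Set Grig) := by
      haveI := hCnormal
      apply Subgroup.normalClosure_le_normal
      rintro x (rfl | rfl | rfl) <;> exact Subgroup.subset_closure (by simp)
    exact le_antisymm hNC hCN
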